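/- arXiv:1507.06274 — 2 statements merged into one kernel-verified Lean document; each statement's English description precedes it below -/
import Mathlib

section
/- Let n ≥ 2 and let c_{i,j} = Σ_{k=1}^{n−1} a†_{i,k}a_{j,k} be the boson realization of gl(n) on n sites with n−1 species. For each m with 1 ≤ m ≤ n−1, define the determinant operator D_m = det( (a†_{p,q})_{1 ≤ p,q ≤ m} ) (a polynomial in commuting creation operators). Then for every raising operator c_{i,j} with i < j, the state D_{n−1}^{κ_{n−1}} ⋯ D_2^{κ_2} D_1^{κ_1} |0⟩ is annihilated: c_{i,j} D_{n−1}^{κ_{n−1}} ⋯ D_1^{κ_1} |0⟩ = 0. -/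
section HWAux

variable {V : Type*} [AddCommGroup V] [Module ℂ V]

/-- Product of creation operators `ad p (f p)` over a list of row indices. -/
private def detP (ad : ℕ → ℕ → Module.End ℂ V) (f : ℕ → ℕ) (l : List ℕ) :
    Module.End ℂ V :=
  (l.map fun p => ad p (f p)).prod

private lemma detP_append (ad : ℕ → ℕ → Module.End ℂ V) (f : ℕ → ℕ) (l₁ l₂ : List ℕ) :
    detP ad f (l₁ ++ l₂) = detP ad f l₁ * detP ad f l₂ := by
  simp [detP]

private lemma detP_cons (ad : ℕ → ℕ → Module.End ℂ V) (f : ℕ → ℕ) (p : ℕ) (l : List ℕ) :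
    detP ad f (p :: l) = ad p (f p) * detP ad f l := by
  simp [detP]

private lemma detP_congr (ad : ℕ → ℕ → Module.End ℂ V) (f f' : ℕ → ℕ) (l : List ℕ)
    (h : ∀ p ∈ l, f p = f' p) : detP ad f l = detP ad f' l := by
  unfold detP
  congr 1
  exact List.map_congr_left fun p hp => by rw [h p hp]

private lemma commute_detP (ad : ℕ → ℕ → Module.End ℂ V) (f : ℕ → ℕ) (l : List ℕ)
    (x : Module.End ℂ V) (h : ∀ p ∈ l, Commute x (ad p (f p))) :
    Commute x (detP ad f l) :=
  Commute.list_prod_right _ _ fun y hy => by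
    obtain ⟨p, hp, rfl⟩ := List.mem_map.mp hy
    exact h p hp

private lemma tswap_aux {R : Type*} [Ring R] (x y A B : R)
    (hx : Commute x A) (hy : Commute y A) (hxy : Commute x y) :
    x * (A * (y * B)) = y * (A * (x * B)) := by
  calc x * (A * (y * B)) = (x * A) * (y * B) := by rw [mul_assoc]
    _ = (A * x) * (y * B) := by rw [hx.eq]
    _ = A * ((x * y) * B) := by simp only [mul_assoc]
    _ = A * ((y * x) * B) := by rw [hxy.eq]
    _ = (A * y) * (x * B) := by simp only [mul_assoc]
    _ = y * (A * (x * B)) := by rw [← hy.eq, mul_assoc]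

private lemma range_split (j M : ℕ) (h : j < M) :
    List.range M = List.range j ++ j :: (List.range (M - j - 1)).map (fun t => j + 1 + t) := by
  have : M = j + (1 + (M - j - 1)) := by omega
  rw [this, List.range_add, List.range_add]
  congr 1
  simp [List.range_succ]

/-- The column function associated to a permutation of `Fin M`. -/
private def colFn {M : ℕ} (σ : Equiv.Perm (Fin M)) (p : ℕ) : ℕ :=
  if h : p < M then (σ ⟨p, h⟩ : ℕ) else 0

private lemma colFn_pos {M : ℕ} (σ : Equiv.Perm (Fin M)) {p : ℕ} (h : p < M) :
    colFn σ p = (σ ⟨p, h⟩ : ℕ) := dif_pos h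

private lemma colFn_lt {M : ℕ} (hM : 0 < M) (σ : Equiv.Perm (Fin M)) (p : ℕ) :
    colFn σ p < M := by
  unfold colFn
  split
  · exact (σ _).isLt
  · exact hM

/-- The basic commutation step: pushing `a j k` past a product containing exactly one
row-`j` creation operator. -/
private lemma key_comm (n : ℕ) (a ad : ℕ → ℕ → Module.End ℂ V)
    (hccr : ∀ i j k l : ℕ, i < n → j < n → k < n - 1 → l < n - 1 →
      a i k * ad j l - ad j l * a i k = if i = j ∧ k = l then 1 else 0)
    (f : ℕ → ℕ) (j k : ℕ) (hj : j < n) (hfj : f j < n - 1) (hk : k < n - 1)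
    (l₁ l₂ : List ℕ)
    (h₁ : ∀ p ∈ l₁, p < n ∧ f p < n - 1 ∧ p ≠ j)
    (h₂ : ∀ p ∈ l₂, p < n ∧ f p < n - 1 ∧ p ≠ j) :
    a j k * detP ad f (l₁ ++ j :: l₂) =
      detP ad f (l₁ ++ j :: l₂) * a j k +
        (if k = f j then 1 else 0) * detP ad f (l₁ ++ l₂) := by
  have hcom : ∀ (l : List ℕ), (∀ p ∈ l, p < n ∧ f p < n - 1 ∧ p ≠ j) →
      Commute (a j k) (detP ad f l) := by
    intro l hl
    apply commute_detP
    intro p hp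
    obtain ⟨hp1, hp2, hp3⟩ := hl p hp
    have h := hccr j p k (f p) hj hp1 hk hp2
    rw [if_neg (by exact fun hc => hp3 hc.1.symm)] at h
    exact sub_eq_zero.mp h
  have c1 := hcom l₁ h₁
  have c2 := hcom l₂ h₂
  rw [detP_append, detP_cons, detP_append]
  by_cases hkf : k = f j
  · have hswap' : a j k * ad j (f j) = ad j (f j) * a j k + 1 := by
      have h := hccr j j k (f j) hj hj hk hfj
      rw [if_pos ⟨rfl, hkf⟩, sub_eq_iff_eq_add] at h
      rw [h, add_comm]
    rw [if_pos hkf, one_mul]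
    calc a j k * (detP ad f l₁ * (ad j (f j) * detP ad f l₂))
        = (a j k * detP ad f l₁) * (ad j (f j) * detP ad f l₂) := by rw [mul_assoc]
      _ = (detP ad f l₁ * a j k) * (ad j (f j) * detP ad f l₂) := by rw [c1.eq]
      _ = detP ad f l₁ * ((a j k * ad j (f j)) * detP ad f l₂) := by simp only [mul_assoc]
      _ = detP ad f l₁ * ((ad j (f j) * a j k + 1) * detP ad f l₂) := by rw [hswap']
      _ = detP ad f l₁ * (ad j (f j) * (a j k * detP ad f l₂)) +
            detP ad f l₁ * detP ad f l₂ := by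
          rw [add_mul, one_mul, mul_add]; simp only [mul_assoc]
      _ = detP ad f l₁ * (ad j (f j) * (detP ad f l₂ * a j k)) +
            detP ad f l₁ * detP ad f l₂ := by rw [c2.eq]
      _ = detP ad f l₁ * (ad j (f j) * detP ad f l₂) * a j k +
            detP ad f l₁ * detP ad f l₂ := by simp only [mul_assoc]
  · have hd : Commute (a j k) (ad j (f j)) := by
      have h := hccr j j k (f j) hj hj hk hfj
      rw [if_neg (by exact fun hc => hkf hc.2)] at h
      exact sub_eq_zero.mp h
    rw [if_neg hkf, zero_mul, add_zero]
    exact (c1.mul_right (hd.mul_right c2)).eq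

end HWAux

/-- The determinant state `D_{n−1}^{κ_{n−1}} ⋯ D_1^{κ_1} |0⟩`, built from the Leibniz-formula
determinants `D_m` of the `m × m` matrices of creation operators, is annihilated by every
gl(n) raising operator `c_{i,j} = Σ_k a†_{i,k} a_{j,k}` with `i < j`. -/
theorem determinant_state_highest_weight {V : Type*} [AddCommGroup V] [Module ℂ V]
    (n : ℕ) (hn : 2 ≤ n)
    (a ad : ℕ → ℕ → Module.End ℂ V) (v₀ : V)
    (hccr : ∀ i j k l : ℕ, i < n → j < n → k < n - 1 → l < n - 1 →
      a i k * ad j l - ad j l * a i k = if i = j ∧ k = l then 1 else 0)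
    (haa : ∀ i j k l : ℕ, i < n → j < n → k < n - 1 → l < n - 1 →
      a i k * a j l - a j l * a i k = 0)
    (hdd : ∀ i j k l : ℕ, i < n → j < n → k < n - 1 → l < n - 1 →
      ad i k * ad j l - ad j l * ad i k = 0)
    (hvac : ∀ i k : ℕ, i < n → k < n - 1 → (a i k) v₀ = 0)
    (c : ℕ → ℕ → Module.End ℂ V)
    (hc : ∀ i j : ℕ, c i j = ∑ k ∈ Finset.range (n - 1), ad i k * a j k)
    (D : ℕ → Module.End ℂ V)
    (hD : ∀ m : ℕ, D m = ∑ σ : Equiv.Perm (Fin m),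
      (Equiv.Perm.sign σ : ℤ) • (List.ofFn fun p : Fin m => ad (p : ℕ) ((σ p : Fin m) : ℕ)).prod)
    (κ : ℕ → ℕ)
    (ψ : V)
    (hψ : ψ = ((((List.range (n - 1)).reverse).map fun m => D (m + 1) ^ κ (m + 1)).prod) v₀) :
    ∀ i j : ℕ, i < j → j < n → (c i j) ψ = 0 := by
  intro i j hij hjn
  have hin : i < n := lt_trans hij hjn
  have hn1 : n - 1 < n := by omega
  -- basic commutation facts
  have hcomm_dd : ∀ p q r s : ℕ, p < n → q < n → r < n - 1 → s < n - 1 →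
      Commute (ad p r) (ad q s) := fun p q r s h1 h2 h3 h4 =>
    sub_eq_zero.mp (hdd p q r s h1 h2 h3 h4)
  have hcomm_a_ad : ∀ p q r s : ℕ, p < n → q < n → r < n - 1 → s < n - 1 →
      ¬(p = q ∧ r = s) → Commute (a p r) (ad q s) := by
    intro p q r s h1 h2 h3 h4 hne
    have h := hccr p q r s h1 h2 h3 h4
    rw [if_neg hne] at h
    exact sub_eq_zero.mp h
  -- `c i j` commutes with every determinant `D (m+1)`, `m < n - 1`
  have hCD : ∀ m : ℕ, m < n - 1 → Commute (c i j) (D (m + 1)) := by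
    intro m hm
    set M := m + 1 with hMdef
    have hMn : M ≤ n - 1 := by omega
    have hM0 : 0 < M := by omega
    rw [hD]
    by_cases hjM : j < M
    · -- the hard case: i < j < M
      have hiM : i < M := lt_trans hij hjM
      set l₂ : List ℕ := (List.range (M - j - 1)).map (fun t => j + 1 + t) with hl₂def
      set l₁ : List ℕ := (List.range (j - i - 1)).map (fun t => i + 1 + t) with hl₁def
      have hsplitM : List.range M = List.range j ++ j :: l₂ := range_split j M hjM
      have hsplitj : List.range j = List.range i ++ i :: l₁ := range_split i j hij
      have hmem₂ : ∀ p ∈ l₂, j < p ∧ p < M := by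
        intro p hp
        rw [hl₂def, List.mem_map] at hp
        obtain ⟨t, ht, rfl⟩ := hp
        rw [List.mem_range] at ht
        omega
      have hmem₁ : ∀ p ∈ l₁, i < p ∧ p < j := by
        intro p hp
        rw [hl₁def, List.mem_map] at hp
        obtain ⟨t, ht, rfl⟩ := hp
        rw [List.mem_range] at ht
        omega
      have hcol_lt : ∀ (σ : Equiv.Perm (Fin M)) (p : ℕ), colFn σ p < n - 1 :=
        fun σ p => lt_of_lt_of_le (colFn_lt hM0 σ p) hMn
      -- rewrite the Leibniz products as `detP`
      have hPM : ∀ σ : Equiv.Perm (Fin M),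
          (List.ofFn fun p : Fin M => ad (p : ℕ) ((σ p : Fin M) : ℕ)).prod =
            detP ad (colFn σ) (List.range M) := by
        intro σ
        unfold detP
        rw [List.ofFn_eq_map, ← (show (List.finRange M).map Fin.val = List.range M from
          List.ext_getElem (by simp) (by simp)), List.map_map]
        congr 1
        apply List.map_congr_left
        intro p _
        simp only [Function.comp]
        rw [colFn_pos σ p.isLt]
      -- commuting ad's past the full product
      have had_detP : ∀ (r s : ℕ), r < n → s < n - 1 → ∀ (f : ℕ → ℕ) (l : List ℕ),
          (∀ p ∈ l, p < n ∧ f p < n - 1) → Commute (ad r s) (detP ad f l) := by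
        intro r s hr hs f l hl
        apply commute_detP
        intro p hp
        exact hcomm_dd r p s (f p) hr (hl p hp).1 hs (hl p hp).2
      -- validity of the entries of range M
      have hvalid : ∀ (σ : Equiv.Perm (Fin M)) (l : List ℕ), (∀ p ∈ l, p < M) →
          ∀ p ∈ l, p < n ∧ colFn σ p < n - 1 := by
        intro σ l hl p hp
        exact ⟨by have := hl p hp; omega, hcol_lt σ p⟩
      -- the key per-σ commutation
      have hterm : ∀ σ : Equiv.Perm (Fin M),
          c i j * detP ad (colFn σ) (List.range M) =
            detP ad (colFn σ) (List.range M) * c i j +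
              ad i (colFn σ j) * detP ad (colFn σ) (List.range j ++ l₂) := by
        intro σ
        have hgjn1 : colFn σ j < n - 1 := hcol_lt σ j
        have hent₁ : ∀ p ∈ List.range j, p < n ∧ colFn σ p < n - 1 ∧ p ≠ j := by
          intro p hp
          rw [List.mem_range] at hp
          exact ⟨by omega, hcol_lt σ p, by omega⟩
        have hent₂ : ∀ p ∈ l₂, p < n ∧ colFn σ p < n - 1 ∧ p ≠ j := by
          intro p hp
          have := hmem₂ p hp
          exact ⟨by omega, hcol_lt σ p, by omega⟩
        have e1 : ∀ k ∈ Finset.range (n - 1),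
            (ad i k * a j k) * detP ad (colFn σ) (List.range M) =
              detP ad (colFn σ) (List.range M) * (ad i k * a j k) +
                (if k = colFn σ j then
                  ad i k * detP ad (colFn σ) (List.range j ++ l₂) else 0) := by
          intro k hk
          have hk' := Finset.mem_range.mp hk
          have hkey := key_comm n a ad hccr (colFn σ) j k hjn hgjn1 hk'
            (List.range j) l₂ hent₁ hent₂
          rw [← hsplitM] at hkey
          have hPad : Commute (ad i k) (detP ad (colFn σ) (List.range M)) :=
            had_detP i k hin hk' _ _
              (hvalid σ _ (fun p hp => List.mem_range.mp hp))
          calc (ad i k * a j k) * detP ad (colFn σ) (List.range M)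
              = ad i k * (a j k * detP ad (colFn σ) (List.range M)) := by rw [mul_assoc]
            _ = ad i k * (detP ad (colFn σ) (List.range M) * a j k) +
                  ad i k * ((if k = colFn σ j then 1 else 0) *
                    detP ad (colFn σ) (List.range j ++ l₂)) := by rw [hkey, mul_add]
            _ = detP ad (colFn σ) (List.range M) * (ad i k * a j k) +
                  (if k = colFn σ j then
                    ad i k * detP ad (colFn σ) (List.range j ++ l₂) else 0) := by
                congr 1
                · rw [← mul_assoc, hPad.eq, mul_assoc]
                · split_ifs <;> simp
        calc c i j * detP ad (colFn σ) (List.range M)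
            = ∑ k ∈ Finset.range (n - 1),
                (ad i k * a j k) * detP ad (colFn σ) (List.range M) := by
              rw [hc, Finset.sum_mul]
          _ = ∑ k ∈ Finset.range (n - 1),
                (detP ad (colFn σ) (List.range M) * (ad i k * a j k) +
                  (if k = colFn σ j then
                    ad i k * detP ad (colFn σ) (List.range j ++ l₂) else 0)) :=
              Finset.sum_congr rfl e1
          _ = detP ad (colFn σ) (List.range M) * c i j +
                ad i (colFn σ j) * detP ad (colFn σ) (List.range j ++ l₂) := by
              rw [Finset.sum_add_distrib, ← Finset.mul_sum, ← hc,
                Finset.sum_ite_eq' (Finset.range (n - 1)) (colFn σ j)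
                  (fun k => ad i k * detP ad (colFn σ) (List.range j ++ l₂)),
                if_pos (Finset.mem_range.mpr hgjn1)]
      -- the correction terms cancel in pairs
      have hR : ∑ σ : Equiv.Perm (Fin M), (Equiv.Perm.sign σ : ℤ) •
          (ad i (colFn σ j) * detP ad (colFn σ) (List.range j ++ l₂)) = 0 := by
        set iF : Fin M := ⟨i, hiM⟩ with hiF
        set jF : Fin M := ⟨j, hjM⟩ with hjF
        have hneF : iF ≠ jF := by
          intro h
          have := congrArg Fin.val h
          simp [hiF, hjF] at this
          omega
        have hsplit2 : List.range j ++ l₂ = List.range i ++ i :: (l₁ ++ l₂) := by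
          rw [hsplitj]; simp
        have hteq : ∀ σ : Equiv.Perm (Fin M),
            ad i (colFn σ j) * detP ad (colFn σ) (List.range j ++ l₂) =
              ad i (colFn (σ * Equiv.swap iF jF) j) *
                detP ad (colFn (σ * Equiv.swap iF jF)) (List.range j ++ l₂) := by
          intro σ
          set τ := σ * Equiv.swap iF jF with hτ
          have ej : colFn τ j = colFn σ i := by
            rw [colFn_pos τ hjM, colFn_pos σ hiM, hτ, Equiv.Perm.mul_apply]
            congr 2
            exact Equiv.swap_apply_right iF jF
          have ei : colFn τ i = colFn σ j := by
            rw [colFn_pos τ hiM, colFn_pos σ hjM, hτ, Equiv.Perm.mul_apply]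
            congr 2
            exact Equiv.swap_apply_left iF jF
          have eo : ∀ p : ℕ, p ≠ i → p ≠ j → colFn τ p = colFn σ p := by
            intro p hpi hpj
            by_cases hpM : p < M
            · rw [colFn_pos τ hpM, colFn_pos σ hpM, hτ, Equiv.Perm.mul_apply]
              congr 2
              apply Equiv.swap_apply_of_ne_of_ne
              · intro h; exact hpi (congrArg Fin.val h)
              · intro h; exact hpj (congrArg Fin.val h)
            · unfold colFn; rw [dif_neg hpM, dif_neg hpM]
          have hAeq : detP ad (colFn τ) (List.range i) = detP ad (colFn σ) (List.range i) := by
            apply detP_congr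
            intro p hp
            rw [List.mem_range] at hp
            exact eo p (by omega) (by omega)
          have hBeq : detP ad (colFn τ) (l₁ ++ l₂) = detP ad (colFn σ) (l₁ ++ l₂) := by
            apply detP_congr
            intro p hp
            rw [List.mem_append] at hp
            rcases hp with hp | hp
            · have := hmem₁ p hp; exact eo p (by omega) (by omega)
            · have := hmem₂ p hp; exact eo p (by omega) (by omega)
          rw [hsplit2, detP_append, detP_append, detP_cons, detP_cons, hAeq, hBeq, ej, ei]
          -- goal: ad i (colFn σ j) * (A * (ad i (colFn σ i) * B))
          --     = ad i (colFn σ i) * (A * (ad i (colFn σ j) * B))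
          apply tswap_aux
          · apply had_detP i (colFn σ j) hin (hcol_lt σ j)
            exact hvalid σ _ (fun p hp => lt_trans (List.mem_range.mp hp) hiM)
          · apply had_detP i (colFn σ i) hin (hcol_lt σ i)
            exact hvalid σ _ (fun p hp => lt_trans (List.mem_range.mp hp) hiM)
          · exact hcomm_dd i i (colFn σ j) (colFn σ i) hin hin (hcol_lt σ j) (hcol_lt σ i)
        apply Finset.sum_involution (fun σ _ => σ * Equiv.swap iF jF)
        · intro σ _
          rw [← hteq σ]
          have hsign : ((Equiv.Perm.sign (σ * Equiv.swap iF jF)) : ℤ) =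
              -(Equiv.Perm.sign σ : ℤ) := by
            rw [Equiv.Perm.sign_mul, Equiv.Perm.sign_swap hneF]
            simp
          rw [hsign, ← add_smul, add_neg_cancel, zero_smul]
        · intro σ _ _ h
          have h1 : Equiv.swap iF jF = 1 := by
            have := congrArg (fun e => σ⁻¹ * e) h
            simpa [mul_assoc] using this
          have := congrArg (fun e : Equiv.Perm (Fin M) => e iF) h1
          simp [Equiv.swap_apply_left] at this
          exact hneF this.symm
        · intro σ _; exact Finset.mem_univ _
        · intro σ _
          rw [mul_assoc, Equiv.swap_mul_self, mul_one]
      -- assemble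
      rw [commute_iff_eq]
      simp only [hPM]
      rw [Finset.mul_sum, Finset.sum_mul]
      have hterm' : ∀ σ ∈ (Finset.univ : Finset (Equiv.Perm (Fin M))),
          c i j * ((Equiv.Perm.sign σ : ℤ) • detP ad (colFn σ) (List.range M)) =
            ((Equiv.Perm.sign σ : ℤ) • detP ad (colFn σ) (List.range M)) * c i j +
              (Equiv.Perm.sign σ : ℤ) •
                (ad i (colFn σ j) * detP ad (colFn σ) (List.range j ++ l₂)) := by
        intro σ _
        rw [mul_smul_comm, hterm σ, smul_add, smul_mul_assoc]
      rw [Finset.sum_congr rfl hterm', Finset.sum_add_distrib, hR, add_zero]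
    · -- the easy case: M ≤ j
      push_neg at hjM
      apply Commute.sum_right
      intro σ _
      apply Commute.smul_right
      have hbase : ∀ k : ℕ, k < n - 1 →
          Commute (ad i k * a j k)
            ((List.ofFn fun p : Fin M => ad (p : ℕ) ((σ p : Fin M) : ℕ)).prod) := by
        intro k hk
        have hentry : ∀ x ∈ (List.ofFn fun p : Fin M => ad (p : ℕ) ((σ p : Fin M) : ℕ)),
            Commute (ad i k * a j k) x := by
          intro x hx
          obtain ⟨p, rfl⟩ := List.mem_ofFn.mp hx
          have hpn : (p : ℕ) < n := by have := p.isLt; omega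
          have hσp : ((σ p : Fin M) : ℕ) < n - 1 := lt_of_lt_of_le (σ p).isLt hMn
          apply Commute.mul_left
          · exact hcomm_dd i p k _ hin hpn hk hσp
          · apply hcomm_a_ad j p k _ hjn hpn hk hσp
            intro hcon
            have := p.isLt
            omega
        exact Commute.list_prod_right _ _ hentry
      rw [hc]
      apply Commute.sum_left
      intro k hk
      exact hbase k (Finset.mem_range.mp hk)
  -- conclude
  subst hψ
  set W := ((((List.range (n - 1)).reverse).map fun m => D (m + 1) ^ κ (m + 1)).prod)
    with hW
  have hcW : Commute (c i j) W := by
    apply Commute.list_prod_right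
    intro x hx
    obtain ⟨m, hm, rfl⟩ := List.mem_map.mp hx
    rw [List.mem_reverse, List.mem_range] at hm
    exact (hCD m hm).pow_right _
  have hc0 : (c i j) v₀ = 0 := by
    rw [hc]
    rw [LinearMap.sum_apply]
    apply Finset.sum_eq_zero
    intro k hk
    rw [Module.End.mul_apply, hvac j k hjn (Finset.mem_range.mp hk), map_zero]
  calc (c i j) (W v₀) = (c i j * W) v₀ := by rw [Module.End.mul_apply]
    _ = (W * c i j) v₀ := by rw [hcW.eq]
    _ = W ((c i j) v₀) := by rw [Module.End.mul_apply]
    _ = 0 := by rw [hc0, map_zero]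
end

section
/- Let D = det((a†_{p,q})_{1≤p,q≤m}) be the determinant of an m×m matrix of pairwise commuting creation operators, expanded by the Leibniz formula. Then for any 1 ≤ i < j ≤ m, applying the raising bilinear c_{i,j} = Σ_{k=1}^{m} a†_{i,k} a_{j,k} to D|0⟩ gives zero: c_{i,j} D |0⟩ = 0, because the resulting expression is the determinant of a matrix with two equal rows. -/
section Aux

variable {β : Type*}

/-- Congruence for `Multiset.noncommProd`, using proof irrelevance. -/
private theorem multiset_noncommProd_congr' [Monoid β] (s₁ s₂ : Multiset β) (h : s₁ = s₂)
    (c₁ : {x | x ∈ s₁}.Pairwise Commute) (c₂ : {x | x ∈ s₂}.Pairwise Commute) :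
    Multiset.noncommProd s₁ c₁ = Multiset.noncommProd s₂ c₂ := by
  subst h; rfl

/-- A Leibniz-style list product over `Fin n` equals the `noncommProd` over `univ`. -/
private theorem ofFn_prod_eq_noncommProd [Monoid β] {n : ℕ} (f : Fin n → β)
    (hf : ∀ p q, Commute (f p) (f q)) :
    (List.ofFn f).prod = Finset.univ.noncommProd f (fun p _ q _ _ => hf p q) := by
  rw [List.ofFn_eq_map,
    ← Finset.noncommProd_toFinset (List.finRange n) f (fun p _ q _ _ => hf p q)
      (List.nodup_finRange n)]
  exact Finset.noncommProd_congr (List.toFinset_finRange n) (fun _ _ => rfl) _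

/-- Reindexing a `noncommProd` over `univ` along a permutation. -/
private theorem noncommProd_comp_perm [Monoid β] {ι : Type*} [Fintype ι] [DecidableEq ι]
    (f : ι → β) (e : Equiv.Perm ι) (hf : ∀ p q, Commute (f p) (f q)) :
    Finset.univ.noncommProd (fun p => f (e p)) (fun p _ q _ _ => hf _ _)
      = Finset.univ.noncommProd f (fun p _ q _ _ => hf p q) := by
  have he : Finset.univ.val.map (⇑e) = Finset.univ.val := by
    have := congrArg Finset.val (Finset.map_univ_equiv e)
    simpa using this
  have hmap : Finset.univ.val.map (fun p => f (e p)) = Finset.univ.val.map f := by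
    conv_rhs => rw [← he]
    rw [Multiset.map_map]
    rfl
  exact multiset_noncommProd_congr' _ _ hmap _ _

/-- Moving an element `x` through a `noncommProd` of pairwise-commuting elements, when each
commutator `[x, f p]` is a central element `e p`. -/
private theorem comm_expand [Ring β] {ι : Type*} [DecidableEq ι]
    (f e : ι → β) (x : β) (hf : ∀ p q : ι, Commute (f p) (f q))
    (hx : ∀ p, x * f p = f p * x + e p) (he : ∀ (p : ι) (y : β), e p * y = y * e p) :
    ∀ s : Finset ι,
      x * s.noncommProd f (fun p _ q _ _ => hf p q)
        = s.noncommProd f (fun p _ q _ _ => hf p q) * x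
          + ∑ p ∈ s, e p * (s.erase p).noncommProd f (fun p _ q _ _ => hf p q) := by
  intro s
  induction s using Finset.induction_on with
  | empty => erw [Finset.noncommProd_empty]; simp
  | @insert q s hq ih =>
    erw [Finset.noncommProd_insert_of_notMem _ _ _ _ hq, ← mul_assoc, hx q, add_mul,
      mul_assoc, ih, Finset.sum_insert hq, Finset.erase_insert hq]
    have h1 : ∀ p ∈ s,
        e p * ((insert q s).erase p).noncommProd f (fun p _ q _ _ => hf p q)
          = e p * (f q * (s.erase p).noncommProd f (fun p _ q _ _ => hf p q)) := by
      intro p hp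
      erw [Finset.erase_insert_of_ne (by rintro rfl; exact hq hp),
        Finset.noncommProd_insert_of_notMem _ _ _ _ (fun h => hq (Finset.mem_of_mem_erase h))]
    rw [Finset.sum_congr rfl h1, mul_add, Finset.mul_sum]
    have h2 : ∀ p ∈ s,
        f q * (e p * (s.erase p).noncommProd f (fun p _ q _ _ => hf p q))
          = e p * (f q * (s.erase p).noncommProd f (fun p _ q _ _ => hf p q)) := by
      intro p hp
      rw [← mul_assoc, ← he, mul_assoc]
    rw [Finset.sum_congr rfl h2, ← mul_assoc]
    abel

end Aux

set_option maxHeartbeats 1000000 in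
/-- Applying the raising bilinear `c_{i,j} = Σ_k a†_{i,k} a_{j,k}` (with `i < j`) to the
determinant state `D|0⟩`, where `D` is the Leibniz-formula determinant of the `m × m`
matrix of commuting creation operators, gives zero. -/
theorem raising_annihilates_determinant {V : Type*} [AddCommGroup V] [Module ℂ V]
    (m : ℕ)
    (a ad : Fin m → Fin m → Module.End ℂ V) (v₀ : V)
    (hccr : ∀ (i j : Fin m) (k l : Fin m),
      a i k * ad j l - ad j l * a i k = if i = j ∧ k = l then 1 else 0)
    (haa : ∀ (i j : Fin m) (k l : Fin m), a i k * a j l - a j l * a i k = 0)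
    (hdd : ∀ (i j : Fin m) (k l : Fin m), ad i k * ad j l - ad j l * ad i k = 0)
    (hvac : ∀ (i k : Fin m), (a i k) v₀ = 0)
    (c : Fin m → Fin m → Module.End ℂ V)
    (hc : ∀ i j : Fin m, c i j = ∑ k : Fin m, ad i k * a j k)
    (D : Module.End ℂ V)
    (hD : D = ∑ σ : Equiv.Perm (Fin m),
      (Equiv.Perm.sign σ : ℤ) • (List.ofFn fun p : Fin m => ad p (σ p)).prod) :
    ∀ i j : Fin m, i < j → (c i j) (D v₀) = 0 := by
  intro i j hij
  classical
  have hne : i ≠ j := ne_of_lt hij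
  have hcomm : ∀ p q r s : Fin m, Commute (ad p q) (ad r s) :=
    fun p q r s => sub_eq_zero.mp (hdd p r q s)
  -- rewrite the Leibniz products as noncommProd
  have hof : ∀ g : Fin m → Fin m,
      (List.ofFn fun p : Fin m => ad p (g p)).prod
        = Finset.univ.noncommProd (fun p => ad p (g p))
            (fun p _ q _ _ => hcomm p (g p) q (g q)) :=
    fun g => ofFn_prod_eq_noncommProd _ _
  -- key commutation lemma
  have key : ∀ (kk : Fin m) (g : Fin m → Fin m) (s : Finset (Fin m)),
      a j kk * s.noncommProd (fun p => ad p (g p)) (fun p _ q _ _ => hcomm p (g p) q (g q))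
        = s.noncommProd (fun p => ad p (g p)) (fun p _ q _ _ => hcomm p (g p) q (g q)) * a j kk
          + ∑ p ∈ s, (if j = p ∧ kk = g p then (1 : Module.End ℂ V) else 0) *
              (s.erase p).noncommProd (fun p => ad p (g p))
                (fun p _ q _ _ => hcomm p (g p) q (g q)) := by
    intro kk g s
    refine comm_expand _ _ _ _ ?_ ?_ s
    · intro p
      exact sub_eq_iff_eq_add'.mp (hccr j p kk (g p))
    · intro p y
      split <;> simp
  -- applying an annihilator to the product state
  have hannil : ∀ (kk : Fin m) (σ : Equiv.Perm (Fin m)),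
      (a j kk) ((Finset.univ.noncommProd (fun p => ad p (σ p))
          (fun p _ q _ _ => hcomm p (σ p) q (σ q))) v₀)
        = (if kk = σ j then
            ((Finset.univ.erase j).noncommProd (fun p => ad p (σ p))
              (fun p _ q _ _ => hcomm p (σ p) q (σ q))) v₀ else 0) := by
    intro kk σ
    have happ := congrArg (fun f : Module.End ℂ V => f v₀) (key kk σ Finset.univ)
    simp only [Module.End.mul_apply, LinearMap.add_apply, LinearMap.sum_apply,
      hvac, map_zero, zero_add] at happ
    rw [happ, Finset.sum_eq_single j]
    · by_cases hk : kk = σ j <;> simp [hk]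
    · intro p _ hpj
      simp [Ne.symm hpj]
    · simp
  -- the row-replacement map and the replaced products
  set M : Fin m → Fin m := fun p => if p = j then i else p with hM
  have hcommM : ∀ (σ : Equiv.Perm (Fin m)) (p q : Fin m),
      Commute (ad (M p) (σ p)) (ad (M q) (σ q)) := fun σ p q => hcomm _ _ _ _
  set Q : Equiv.Perm (Fin m) → Module.End ℂ V := fun σ =>
    Finset.univ.noncommProd (fun p => ad (M p) (σ p))
      (fun p _ q _ _ => hcommM σ p q) with hQ
  -- each term is the "row-replaced" product
  have hBprod : ∀ σ : Equiv.Perm (Fin m),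
      ad i (σ j) * (Finset.univ.erase j).noncommProd (fun p => ad p (σ p))
          (fun p _ q _ _ => hcomm p (σ p) q (σ q)) = Q σ := by
    intro σ
    have h1 : (Finset.univ.erase j).noncommProd (fun p => ad p (σ p))
          (fun p _ q _ _ => hcomm p (σ p) q (σ q))
        = (Finset.univ.erase j).noncommProd (fun p => ad (M p) (σ p))
          (fun p _ q _ _ => hcommM σ p q) := by
      refine Finset.noncommProd_congr rfl (fun p hp => ?_) _
      rw [hM]
      simp [if_neg (Finset.ne_of_mem_erase hp)]
    rw [h1]
    have h2 := Finset.mul_noncommProd_erase Finset.univ (Finset.mem_univ j)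
      (fun p => ad (M p) (σ p)) (fun p _ q _ _ => hcommM σ p q)
    have h3 : ad (M j) (σ j) = ad i (σ j) := by rw [hM]; simp
    exact h3 ▸ h2
  -- the pairing cancellation: ∑ σ, sign σ • Q σ = 0
  have hQcancel : (∑ σ : Equiv.Perm (Fin m), (Equiv.Perm.sign σ : ℤ) • Q σ) = 0 := by
    set τ : Equiv.Perm (Fin m) := Equiv.swap i j with hτ
    have hQswap : ∀ σ : Equiv.Perm (Fin m), Q (σ * τ) = Q σ := by
      intro σ
      have hstep : ∀ p : Fin m, ad (M p) (σ (τ p)) = ad (M (τ p)) (σ (τ p)) := by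
        intro p
        by_cases hpi : p = i
        · subst hpi
          rw [hτ, Equiv.swap_apply_left, hM]
          simp [hne]
        · by_cases hpj : p = j
          · subst hpj
            rw [hτ, Equiv.swap_apply_right, hM]
            simp [hne]
          · rw [hτ, Equiv.swap_apply_of_ne_of_ne hpi hpj]
      have h1 : Q (σ * τ)
          = Finset.univ.noncommProd (fun p => ad (M (τ p)) (σ (τ p)))
              (fun p _ q _ _ => hcomm _ _ _ _) := by
        rw [hQ]
        exact Finset.noncommProd_congr rfl (fun p _ => hstep p) _
      rw [h1, hQ]
      exact noncommProd_comp_perm (fun p => ad (M p) (σ p)) τ (fun p q => hcomm _ _ _ _)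
    have hsign : ∀ σ : Equiv.Perm (Fin m),
        ((Equiv.Perm.sign (σ * τ) : ℤ)) = -(Equiv.Perm.sign σ : ℤ) := by
      intro σ
      rw [hτ, Equiv.Perm.sign_mul, Equiv.Perm.sign_swap hne]
      simp
    have hre : (∑ σ : Equiv.Perm (Fin m), (Equiv.Perm.sign σ : ℤ) • Q σ)
        = ∑ σ : Equiv.Perm (Fin m), (Equiv.Perm.sign (σ * τ) : ℤ) • Q (σ * τ) :=
      (Equiv.sum_comp (Equiv.mulRight τ)
        (fun σ => (Equiv.Perm.sign σ : ℤ) • Q σ)).symm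
    have hneg : (∑ σ : Equiv.Perm (Fin m), (Equiv.Perm.sign σ : ℤ) • Q σ)
        = -(∑ σ : Equiv.Perm (Fin m), (Equiv.Perm.sign σ : ℤ) • Q σ) := by
      nth_rewrite 1 [hre]
      rw [← Finset.sum_neg_distrib]
      refine Finset.sum_congr rfl fun σ _ => ?_
      rw [hQswap σ, hsign σ, neg_smul]
    have h2 : (2 : ℂ) • (∑ σ : Equiv.Perm (Fin m), (Equiv.Perm.sign σ : ℤ) • Q σ) = 0 := by
      rw [two_smul]
      nth_rewrite 1 [hneg]
      rw [neg_add_cancel]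
    have := congrArg (fun x : Module.End ℂ V => (2⁻¹ : ℂ) • x) h2
    simpa [smul_smul] using this
  -- main computation
  rw [hc, hD]
  simp only [hof, LinearMap.sum_apply, LinearMap.smul_apply, map_sum, map_zsmul,
    Module.End.mul_apply]
  have hterm : ∀ σ : Equiv.Perm (Fin m),
      (∑ k : Fin m, (ad i k) ((a j k) ((Finset.univ.noncommProd (fun p => ad p (σ p))
            (fun p _ q _ _ => hcomm p (σ p) q (σ q))) v₀)))
        = (Q σ) v₀ := by
    intro σ
    have hterm1 : ∀ k : Fin m,
        (ad i k) ((a j k) ((Finset.univ.noncommProd (fun p => ad p (σ p))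
            (fun p _ q _ _ => hcomm p (σ p) q (σ q))) v₀))
          = (if k = σ j then (Q σ) v₀ else 0) := by
      intro k
      by_cases hk : k = σ j
      · subst hk
        rw [hannil (σ j) σ, if_pos rfl, if_pos rfl, ← hBprod σ, Module.End.mul_apply]
      · rw [hannil k σ, if_neg hk, if_neg hk, map_zero]
    simp only [hterm1]
    rw [Finset.sum_ite_eq' Finset.univ (σ j) (fun _ => (Q σ) v₀), if_pos (Finset.mem_univ _)]
  rw [Finset.sum_congr rfl fun σ _ => by rw [hterm σ]]
  calc (∑ σ : Equiv.Perm (Fin m), (Equiv.Perm.sign σ : ℤ) • (Q σ) v₀)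
      = (∑ σ : Equiv.Perm (Fin m), (Equiv.Perm.sign σ : ℤ) • Q σ) v₀ := by
        simp only [LinearMap.sum_apply, LinearMap.smul_apply]
    _ = 0 := by rw [hQcancel]; rfl
end
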